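/- (Factorisation theorem, multiplicative part.) The bijection ξ transports the double cross product multiplication to the multiplication of X: for all u, v ∈ A ⊗ H, ξ(m_D(u ⊗ v)) = ξ(u)·ξ(v) in X, and ξ(1_A ⊗ 1_H) = 1_X. Hence ξ is an algebra isomorphism from the double cross product A ⋈ H onto X. -/

import Mathlib

set_option maxHeartbeats 1000000
set_option synthInstance.maxHeartbeats 200000


open TensorProduct

noncomputable section

universe u

variable {k A H X : Type u} [Field k]
  [Ring A] [Ring H] [Ring X]
  [Bialgebra k A] [Bialgebra k H] [Bialgebra k X]

/-- ζ : H ⊗ A → A ⊗ H, ζ(h ⊗ a) = ξ⁻¹(j_H(h) · j_A(a)). -/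
def zetaF (jA : A →ₐc[k] X) (jH : H →ₐc[k] X) (ξ : (A ⊗[k] H) ≃ₗ[k] X) :
    H ⊗[k] A →ₗ[k] A ⊗[k] H :=
  ξ.symm.toLinearMap ∘ₗ LinearMap.mul' k X ∘ₗ
    TensorProduct.map (jH : H →ₗ[k] X) (jA : A →ₗ[k] X)

/-- α := (id_A ⊗ ε_H) ∘ ζ. -/
def alphaF (jA : A →ₐc[k] X) (jH : H →ₐc[k] X) (ξ : (A ⊗[k] H) ≃ₗ[k] X) :
    H ⊗[k] A →ₗ[k] A :=
  (TensorProduct.rid k A).toLinearMap ∘ₗ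
    TensorProduct.map LinearMap.id Coalgebra.counit ∘ₗ zetaF jA jH ξ

/-- β := (ε_A ⊗ id_H) ∘ ζ. -/
def betaF (jA : A →ₐc[k] X) (jH : H →ₐc[k] X) (ξ : (A ⊗[k] H) ≃ₗ[k] X) :
    H ⊗[k] A →ₗ[k] H :=
  (TensorProduct.lid k H).toLinearMap ∘ₗ
    TensorProduct.map Coalgebra.counit LinearMap.id ∘ₗ zetaF jA jH ξ

/-- The map H ⊗ A → A ⊗ H, h ⊗ a ↦ Σ α(h₁ ⊗ a₁) ⊗ β(h₂ ⊗ a₂). -/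
def zetaAB (jA : A →ₐc[k] X) (jH : H →ₐc[k] X) (ξ : (A ⊗[k] H) ≃ₗ[k] X) :
    H ⊗[k] A →ₗ[k] A ⊗[k] H :=
  TensorProduct.map (alphaF jA jH ξ) (betaF jA jH ξ) ∘ₗ
    (Coalgebra.comul : H ⊗[k] A →ₗ[k] (H ⊗[k] A) ⊗[k] (H ⊗[k] A))

/-- The double cross product multiplication m_D on A ⊗ H:
m_D((a ⊗ h) ⊗ (a' ⊗ h')) = Σ a·α(h₁ ⊗ a'₁) ⊗ β(h₂ ⊗ a'₂)·h'. -/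
def mD (jA : A →ₐc[k] X) (jH : H →ₐc[k] X) (ξ : (A ⊗[k] H) ≃ₗ[k] X) :
    (A ⊗[k] H) ⊗[k] (A ⊗[k] H) →ₗ[k] A ⊗[k] H :=
  TensorProduct.map (LinearMap.mul' k A) LinearMap.id ∘ₗ
  (TensorProduct.assoc k A A H).symm.toLinearMap ∘ₗ
  TensorProduct.map LinearMap.id
    (TensorProduct.map LinearMap.id (LinearMap.mul' k H) ∘ₗ
     (TensorProduct.assoc k A H H).toLinearMap ∘ₗ
     TensorProduct.map (zetaAB jA jH ξ) LinearMap.id ∘ₗ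
     (TensorProduct.assoc k H A H).symm.toLinearMap) ∘ₗ
  (TensorProduct.assoc k A H (A ⊗[k] H)).toLinearMap


section Aux

variable {k X : Type u} [Field k] [Ring X] [Bialgebra k X]

/-- On pure tensors, `(map f f u) * (map g g v) = map m m (tttComm (u ⊗ v))`
where `m = mul' ∘ map f g`. -/
lemma mul_map_ttt {C D : Type u} [AddCommGroup C] [AddCommGroup D]
    [Module k C] [Module k D]
    (f : C →ₗ[k] X) (g : D →ₗ[k] X) (u : C ⊗[k] C) (v : D ⊗[k] D) :
    (TensorProduct.map f f u) * (TensorProduct.map g g v) =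
      TensorProduct.map (LinearMap.mul' k X ∘ₗ TensorProduct.map f g)
        (LinearMap.mul' k X ∘ₗ TensorProduct.map f g)
        (TensorProduct.tensorTensorTensorComm k C C D D (u ⊗ₜ[k] v)) := by
  induction u with
  | zero => simp [zero_tmul]
  | add x y hx hy => simp only [map_add, add_mul, add_tmul, hx, hy]
  | tmul c₁ c₂ =>
    induction v with
    | zero => simp [tmul_zero]
    | add x y hx hy => simp only [map_add, mul_add, tmul_add, hx, hy]
    | tmul d₁ d₂ =>
      simp [Algebra.TensorProduct.tmul_mul_tmul]

/-- For bialgebra homs `f : C → X`, `g : D → X`, the map `μ_X ∘ (f ⊗ g)` is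
compatible with comultiplications. -/
lemma comul_mul_map {C D : Type u} [Ring C] [Ring D] [Bialgebra k C] [Bialgebra k D]
    (f : C →ₐc[k] X) (g : D →ₐc[k] X) (u : C ⊗[k] D) :
    Coalgebra.comul (R := k) (LinearMap.mul' k X
        (TensorProduct.map (f : C →ₗ[k] X) (g : D →ₗ[k] X) u)) =
      TensorProduct.map (LinearMap.mul' k X ∘ₗ TensorProduct.map (f : C →ₗ[k] X) (g : D →ₗ[k] X))
        (LinearMap.mul' k X ∘ₗ TensorProduct.map (f : C →ₗ[k] X) (g : D →ₗ[k] X))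
        (Coalgebra.comul u) := by
  induction u with
  | zero => simp
  | add x y hx hy => simp only [map_add, hx, hy]
  | tmul c d =>
    rw [TensorProduct.map_tmul, LinearMap.mul'_apply]
    have hf : (f : C →ₗ[k] X) c = f c := rfl
    have hg : (g : D →ₗ[k] X) d = g d := rfl
    rw [hf, hg, Bialgebra.comul_mul, ← CoalgHomClass.map_comp_comul_apply f c,
      ← CoalgHomClass.map_comp_comul_apply g d]
    simp only [TensorProduct.comul_def, AlgebraTensorModule.tensorTensorTensorComm_eq, AlgebraTensorModule.map_eq, LinearMap.coe_comp,
      Function.comp_apply, TensorProduct.map_tmul]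
    exact mul_map_ttt (f : C →ₗ[k] X) (g : D →ₗ[k] X) _ _

variable {A H : Type u} [Ring A] [Ring H] [Bialgebra k A] [Bialgebra k H]

lemma xi_eq (jA : A →ₐc[k] X) (jH : H →ₐc[k] X) (ξ : (A ⊗[k] H) ≃ₗ[k] X)
    (hξ : ∀ (a : A) (h : H), ξ (a ⊗ₜ[k] h) = jA a * jH h) :
    (ξ : A ⊗[k] H →ₗ[k] X) =
      LinearMap.mul' k X ∘ₗ TensorProduct.map (jA : A →ₗ[k] X) (jH : H →ₗ[k] X) :=
  TensorProduct.ext' fun a h => by simp [hξ]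

lemma xi_zeta (jA : A →ₐc[k] X) (jH : H →ₐc[k] X) (ξ : (A ⊗[k] H) ≃ₗ[k] X)
    (x : H ⊗[k] A) :
    ξ (zetaF jA jH ξ x) =
      LinearMap.mul' k X (TensorProduct.map (jH : H →ₗ[k] X) (jA : A →ₗ[k] X) x) := by
  simp [zetaF]

lemma comul_xi (jA : A →ₐc[k] X) (jH : H →ₐc[k] X) (ξ : (A ⊗[k] H) ≃ₗ[k] X)
    (hξ : ∀ (a : A) (h : H), ξ (a ⊗ₜ[k] h) = jA a * jH h) (u : A ⊗[k] H) :
    Coalgebra.comul (R := k) (ξ u) =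
      TensorProduct.map (ξ : A ⊗[k] H →ₗ[k] X) (ξ : A ⊗[k] H →ₗ[k] X)
        (Coalgebra.comul u) := by
  have hu : ξ u = LinearMap.mul' k X
      (TensorProduct.map (jA : A →ₗ[k] X) (jH : H →ₗ[k] X) u) :=
    LinearMap.congr_fun (xi_eq jA jH ξ hξ) u
  rw [hu, xi_eq jA jH ξ hξ]
  exact comul_mul_map (k := k) jA jH u

lemma comul_zeta (jA : A →ₐc[k] X) (jH : H →ₐc[k] X) (ξ : (A ⊗[k] H) ≃ₗ[k] X)
    (hξ : ∀ (a : A) (h : H), ξ (a ⊗ₜ[k] h) = jA a * jH h) (x : H ⊗[k] A) :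
    Coalgebra.comul (R := k) (zetaF jA jH ξ x) =
      TensorProduct.map (zetaF jA jH ξ) (zetaF jA jH ξ) (Coalgebra.comul x) := by
  apply (TensorProduct.congr ξ ξ).injective
  have hc : ∀ y : (A ⊗[k] H) ⊗[k] (A ⊗[k] H), (TensorProduct.congr ξ ξ) y =
      TensorProduct.map (ξ : A ⊗[k] H →ₗ[k] X) (ξ : A ⊗[k] H →ₗ[k] X) y := fun y => rfl
  have hcomp : TensorProduct.map (ξ : A ⊗[k] H →ₗ[k] X) (ξ : A ⊗[k] H →ₗ[k] X) ∘ₗ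
      TensorProduct.map (zetaF jA jH ξ) (zetaF jA jH ξ) =
      TensorProduct.map ((ξ : A ⊗[k] H →ₗ[k] X) ∘ₗ zetaF jA jH ξ)
        ((ξ : A ⊗[k] H →ₗ[k] X) ∘ₗ zetaF jA jH ξ) :=
    (TensorProduct.map_comp _ _ _ _).symm
  have hxz : (ξ : A ⊗[k] H →ₗ[k] X) ∘ₗ zetaF jA jH ξ =
      LinearMap.mul' k X ∘ₗ TensorProduct.map (jH : H →ₗ[k] X) (jA : A →ₗ[k] X) :=
    LinearMap.ext fun x => xi_zeta jA jH ξ x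
  have hpt : ∀ y : (H ⊗[k] A) ⊗[k] (H ⊗[k] A),
      TensorProduct.map (ξ : A ⊗[k] H →ₗ[k] X) (ξ : A ⊗[k] H →ₗ[k] X)
        (TensorProduct.map (zetaF jA jH ξ) (zetaF jA jH ξ) y) =
      TensorProduct.map
        (LinearMap.mul' k X ∘ₗ TensorProduct.map (jH : H →ₗ[k] X) (jA : A →ₗ[k] X))
        (LinearMap.mul' k X ∘ₗ TensorProduct.map (jH : H →ₗ[k] X) (jA : A →ₗ[k] X)) y := by
    intro y
    rw [← LinearMap.comp_apply, hcomp, hxz]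
  rw [hc, hc, hpt, ← comul_xi jA jH ξ hξ, xi_zeta, comul_mul_map (k := k) jH jA x]

/-- Counitality for the tensor-product coalgebra: `((id ⊗ ε) ⊗ (ε ⊗ id)) ∘ Δ = id`. -/
lemma counit_reconstruct (u : A ⊗[k] H) :
    TensorProduct.map
      ((TensorProduct.rid k A).toLinearMap ∘ₗ
        TensorProduct.map LinearMap.id (Coalgebra.counit (R := k) (A := H)))
      ((TensorProduct.lid k H).toLinearMap ∘ₗ
        TensorProduct.map (Coalgebra.counit (R := k) (A := A)) LinearMap.id)
      (Coalgebra.comul (R := k) u) = u := by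
  induction u with
  | zero => simp
  | add x y hx hy => simp only [map_add, hx, hy]
  | tmul a h =>
    simp only [TensorProduct.comul_def, AlgebraTensorModule.tensorTensorTensorComm_eq, AlgebraTensorModule.map_eq, LinearMap.coe_comp,
      Function.comp_apply, TensorProduct.map_tmul, LinearEquiv.coe_coe]
    have key : ∀ (u' : A ⊗[k] A) (v' : H ⊗[k] H),
        TensorProduct.map
          ((TensorProduct.rid k A).toLinearMap ∘ₗ
            TensorProduct.map LinearMap.id (Coalgebra.counit (R := k) (A := H)))
          ((TensorProduct.lid k H).toLinearMap ∘ₗ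
            TensorProduct.map (Coalgebra.counit (R := k) (A := A)) LinearMap.id)
          (TensorProduct.tensorTensorTensorComm k A A H H (u' ⊗ₜ[k] v')) =
          (TensorProduct.rid k A
              (LinearMap.lTensor A (Coalgebra.counit (R := k) (A := A)) u')) ⊗ₜ[k]
          (TensorProduct.lid k H
              (LinearMap.rTensor H (Coalgebra.counit (R := k) (A := H)) v')) := by
      intro u' v'
      induction u' with
      | zero => simp [zero_tmul]
      | add x y hx hy => simp only [map_add, add_tmul, hx, hy]
      | tmul a₁ a₂ =>
        induction v' with
        | zero => simp [tmul_zero]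
        | add x y hx hy => simp only [map_add, tmul_add, hx, hy]
        | tmul h₁ h₂ =>
          simp [smul_tmul, tmul_smul, smul_smul, mul_comm]
    rw [key, Coalgebra.lTensor_counit_comul, Coalgebra.rTensor_counit_comul]
    simp

lemma zetaAB_eq (jA : A →ₐc[k] X) (jH : H →ₐc[k] X) (ξ : (A ⊗[k] H) ≃ₗ[k] X)
    (hξ : ∀ (a : A) (h : H), ξ (a ⊗ₜ[k] h) = jA a * jH h) (x : H ⊗[k] A) :
    zetaAB jA jH ξ x = zetaF jA jH ξ x := by
  have h1 : TensorProduct.map (alphaF jA jH ξ) (betaF jA jH ξ) =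
      TensorProduct.map
        ((TensorProduct.rid k A).toLinearMap ∘ₗ
          TensorProduct.map LinearMap.id (Coalgebra.counit (R := k) (A := H)))
        ((TensorProduct.lid k H).toLinearMap ∘ₗ
          TensorProduct.map (Coalgebra.counit (R := k) (A := A)) LinearMap.id) ∘ₗ
      TensorProduct.map (zetaF jA jH ξ) (zetaF jA jH ξ) := by
    rw [← TensorProduct.map_comp]; rfl
  rw [zetaAB, LinearMap.comp_apply, h1, LinearMap.comp_apply,
    ← comul_zeta jA jH ξ hξ, counit_reconstruct]

lemma step_lemma (jA : A →ₐc[k] X) (jH : H →ₐc[k] X) (ξ : (A ⊗[k] H) ≃ₗ[k] X)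
    (hξ : ∀ (a : A) (h : H), ξ (a ⊗ₜ[k] h) = jA a * jH h)
    (a : A) (h' : H) (w : A ⊗[k] H) :
    ξ (TensorProduct.map (LinearMap.mul' k A) LinearMap.id
        ((TensorProduct.assoc k A A H).symm
          (a ⊗ₜ[k] (TensorProduct.map LinearMap.id (LinearMap.mul' k H)
            ((TensorProduct.assoc k A H H) (w ⊗ₜ[k] h')))))) = jA a * ξ w * jH h' := by
  induction w with
  | zero => simp
  | add x y hx hy =>
    simp only [add_tmul, map_add, tmul_add, hx, hy, mul_add, add_mul]
  | tmul a'' h'' =>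
    simp only [TensorProduct.assoc_tmul, TensorProduct.map_tmul, LinearMap.id_coe, id_eq,
      LinearMap.mul'_apply, TensorProduct.assoc_symm_tmul, hξ, map_mul]
    simp only [mul_assoc]

end Aux

/-- Factorisation theorem, multiplicative part: ξ transports
m_D to the multiplication of X: ξ(m_D(u ⊗ v)) = ξ(u)·ξ(v) and ξ(1 ⊗ 1) = 1.
Hence ξ is an algebra isomorphism from the double cross product A ⋈ H onto X. -/
theorem factorisation_mult (jA : A →ₐc[k] X) (jH : H →ₐc[k] X)
    (ξ : (A ⊗[k] H) ≃ₗ[k] X)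
    (hξ : ∀ (a : A) (h : H), ξ (a ⊗ₜ[k] h) = jA a * jH h) :
    (∀ u v : A ⊗[k] H, ξ (mD jA jH ξ (u ⊗ₜ[k] v)) = ξ u * ξ v) ∧
    ξ ((1 : A) ⊗ₜ[k] (1 : H)) = (1 : X) := by
  constructor
  · intro u v
    induction u with
    | zero => simp [zero_tmul]
    | add x y hx hy => simp only [add_tmul, map_add, hx, hy, add_mul]
    | tmul a h =>
      induction v with
      | zero => simp [tmul_zero]
      | add x y hx hy => simp only [tmul_add, map_add, hx, hy, mul_add]
      | tmul a' h' =>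
        rw [mD]
        simp only [LinearMap.coe_comp, Function.comp_apply, LinearEquiv.coe_coe,
          TensorProduct.assoc_tmul, TensorProduct.map_tmul, LinearMap.id_coe, id_eq,
          TensorProduct.assoc_symm_tmul]
        rw [zetaAB_eq jA jH ξ hξ, step_lemma jA jH ξ hξ, xi_zeta]
        simp only [TensorProduct.map_tmul, LinearMap.mul'_apply, hξ]
        simp only [mul_assoc]
        rfl
  · rw [hξ]; simp
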